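/- For an irreducible Markov jump process on a finite connected graph with N vertices, the unique stationary distribution is given by the Kirchhoff/matrix-tree formula ρ(x) = w(x) / ∑_y w(y), where w(x) = ∑_{T} ∏_{(u,v)∈T} k(u,v) is the sum of weights over all spanning trees rooted at x (every edge directed toward x along the tree). -/

import Mathlib

open Matrix

/-- The one-step relation of a finite set of directed edges. -/
def forestStep {V : Type*} (F : Finset (V × V)) (a b : V) : Prop := (a, b) ∈ F

/-- `F` is a spanning tree of `G` rooted at `x`: its directed edges are edges
of `G`, every vertex has at most one outgoing edge, there are no directed
cycles, and from every vertex there is a directed path to `x`. -/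
def IsSpanningTreeRootedAt {V : Type*} [DecidableEq V] (G : SimpleGraph V)
    (F : Finset (V × V)) (x : V) : Prop :=
  (∀ e ∈ F, G.Adj e.1 e.2) ∧
  (∀ v : V, (F.filter (fun e => e.1 = v)).card ≤ 1) ∧
  (∀ a b : V, (a, b) ∈ F → ¬ Relation.ReflTransGen (forestStep F) b a) ∧
  (∀ v : V, Relation.ReflTransGen (forestStep F) v x)

/-- The weight of a tree: product of the rates on its directed edges. -/
def forestWeight {V : Type*} (k : V → V → ℝ) (F : Finset (V × V)) : ℝ :=
  ∏ e ∈ F, k e.1 e.2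

/-- `kirchhoffWeight k G x` is `w(x)`, the sum of the weights of all spanning
trees of `G` rooted at `x`. -/
noncomputable def kirchhoffWeight {V : Type*} [Fintype V] [DecidableEq V]
    (k : V → V → ℝ) (G : SimpleGraph V) (x : V) : ℝ :=
  ∑ F : Finset (V × V),
    Set.indicator {F | IsSpanningTreeRootedAt G F x} (forestWeight k) F

open Finset Relation

section Helpers
variable {V : Type*}

/-- reach notation -/
local notation "reach" => fun (F : Finset (V × V)) => Relation.ReflTransGen (forestStep F)

lemma reach_mono {F F' : Finset (V × V)} (h : F ⊆ F') {a b : V}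
    (hr : Relation.ReflTransGen (forestStep F) a b) :
    Relation.ReflTransGen (forestStep F') a b :=
  Relation.ReflTransGen.mono (r := forestStep F) (fun _ _ hx => h hx) a b hr

/-- every vertex has at most one out-edge -/
def OutUnique (F : Finset (V × V)) : Prop :=
  ∀ ⦃v a b : V⦄, (v, a) ∈ F → (v, b) ∈ F → a = b

lemma outUnique_subset {F F' : Finset (V × V)} (h : F ⊆ F') (hU : OutUnique F') :
    OutUnique F := fun _ _ _ ha hb => hU (h ha) (h hb)

lemma outUnique_of_card [DecidableEq V] {F : Finset (V × V)}
    (h2 : ∀ v : V, (F.filter (fun e => e.1 = v)).card ≤ 1) : OutUnique F := by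
  intro v a b ha hb
  have h1 : (v, a) ∈ F.filter (fun e => e.1 = v) := by simp [ha]
  have h2' : (v, b) ∈ F.filter (fun e => e.1 = v) := by simp [hb]
  have := Finset.card_le_one.mp (h2 v) _ h1 _ h2'
  exact congrArg Prod.snd this

lemma card_of_outUnique [DecidableEq V] {F : Finset (V × V)} (hU : OutUnique F) :
    ∀ v : V, (F.filter (fun e => e.1 = v)).card ≤ 1 := by
  intro v
  apply Finset.card_le_one.mpr
  rintro ⟨a1, a2⟩ ha ⟨b1, b2⟩ hb
  simp only [Finset.mem_filter] at ha hb
  obtain ⟨ha, rfl⟩ := ha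
  obtain ⟨hb, (rfl : b1 = a1)⟩ := hb
  exact congrArg _ (hU ha hb)

lemma reach_sink {F : Finset (V × V)} {a : V} (h : ∀ b, (a, b) ∉ F) {u : V}
    (hr : Relation.ReflTransGen (forestStep F) a u) : u = a := by
  rcases hr.cases_head with rfl | ⟨s, hs, _⟩
  · rfl
  · exact absurd hs (h s)

lemma reach_comparable {F : Finset (V × V)} (hU : OutUnique F) {a b c : V}
    (hab : Relation.ReflTransGen (forestStep F) a b)
    (hac : Relation.ReflTransGen (forestStep F) a c) :
    Relation.ReflTransGen (forestStep F) b c ∨ Relation.ReflTransGen (forestStep F) c b := by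
  induction hab using Relation.ReflTransGen.head_induction_on with
  | refl => exact Or.inl hac
  | head h' h ih =>
    rename_i a' s
    rcases hac.cases_head with rfl | ⟨s', hs', hrest⟩
    · exact Or.inr (Relation.ReflTransGen.head h' h)
    · have : s = s' := hU h' hs'
      exact ih (this ▸ hrest)

lemma reach_erase {F : Finset (V × V)} [DecidableEq V] {e : V × V} {a b : V}
    (hr : Relation.ReflTransGen (forestStep F) a b) :
    Relation.ReflTransGen (forestStep (F.erase e)) a b ∨
      (Relation.ReflTransGen (forestStep (F.erase e)) a e.1 ∧
        Relation.ReflTransGen (forestStep F) e.2 b) := by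
  induction hr using Relation.ReflTransGen.head_induction_on with
  | refl => exact Or.inl .refl
  | head h' h ih =>
    rename_i a' s
    by_cases he : (a', s) = e
    · subst he
      exact Or.inr ⟨.refl, h⟩
    · have hm : (a', s) ∈ F.erase e := Finset.mem_erase.mpr ⟨he, h'⟩
      rcases ih with hl | ⟨h1, h2⟩
      · exact Or.inl (Relation.ReflTransGen.head hm hl)
      · exact Or.inr ⟨Relation.ReflTransGen.head hm h1, h2⟩

lemma reach_insert {F : Finset (V × V)} [DecidableEq V] {e : V × V} {a b : V}
    (hr : Relation.ReflTransGen (forestStep (insert e F)) a b) :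
    Relation.ReflTransGen (forestStep F) a b ∨
      (Relation.ReflTransGen (forestStep F) a e.1 ∧
        Relation.ReflTransGen (forestStep (insert e F)) e.2 b) := by
  induction hr using Relation.ReflTransGen.head_induction_on with
  | refl => exact Or.inl .refl
  | head h' h ih =>
    rename_i a' s
    rcases Finset.mem_insert.mp h' with he | hm
    · subst he
      exact Or.inr ⟨.refl, h⟩
    · rcases ih with hl | ⟨h1, h2⟩
      · exact Or.inl (Relation.ReflTransGen.head hm hl)
      · exact Or.inr ⟨Relation.ReflTransGen.head hm h1, h2⟩

end Helpers

section TreeLemmas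
attribute [local instance] Classical.propDecidable
variable {V : Type*} [DecidableEq V] {G : SimpleGraph V}

lemma tree_outUnique {F : Finset (V × V)} {r : V}
    (h : IsSpanningTreeRootedAt G F r) : OutUnique F :=
  outUnique_of_card h.2.1

lemma tree_root_sink {F : Finset (V × V)} {r : V}
    (h : IsSpanningTreeRootedAt G F r) : ∀ b, (r, b) ∉ F :=
  fun b hb => h.2.2.1 r b hb (h.2.2.2 b)

lemma tree_exists_out {F : Finset (V × V)} {r v : V}
    (h : IsSpanningTreeRootedAt G F r) (hv : v ≠ r) : ∃ s, (v, s) ∈ F := by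
  rcases (h.2.2.2 v).cases_head with heq | ⟨s, hs, _⟩
  · exact absurd heq hv
  · exact ⟨s, hs⟩

noncomputable def treeSucc (F : Finset (V × V)) (v : V) : V :=
  if h : ∃ s, (v, s) ∈ F then h.choose else v

lemma treeSucc_mem {F : Finset (V × V)} {v : V} (h : ∃ s, (v, s) ∈ F) :
    (v, treeSucc F v) ∈ F := by
  rw [treeSucc, dif_pos h]; exact h.choose_spec

lemma treeSucc_eq {F : Finset (V × V)} (hU : OutUnique F) {v a : V}
    (h : (v, a) ∈ F) : treeSucc F v = a :=
  hU (treeSucc_mem ⟨a, h⟩) h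

noncomputable def treePred (F : Finset (V × V)) (z c : V) : V :=
  if h : ∃ y, (y, c) ∈ F ∧ Relation.ReflTransGen (forestStep F) z y then h.choose else z

lemma treePred_spec {F : Finset (V × V)} {z c : V}
    (h : ∃ y, (y, c) ∈ F ∧ Relation.ReflTransGen (forestStep F) z y) :
    (treePred F z c, c) ∈ F ∧ Relation.ReflTransGen (forestStep F) z (treePred F z c) := by
  rw [treePred, dif_pos h]; exact h.choose_spec

/-- uniqueness of the predecessor of the root on a path -/
lemma treePred_unique {T' : Finset (V × V)} {c z : V}
    (hT' : IsSpanningTreeRootedAt G T' c) {y₁ y₂ : V}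
    (h1 : (y₁, c) ∈ T' ∧ Relation.ReflTransGen (forestStep T') z y₁)
    (h2 : (y₂, c) ∈ T' ∧ Relation.ReflTransGen (forestStep T') z y₂) : y₁ = y₂ := by
  have hU := tree_outUnique hT'
  have hsink := tree_root_sink hT'
  have key : ∀ a b : V, (a, c) ∈ T' → (b, c) ∈ T' →
      Relation.ReflTransGen (forestStep T') a b → a = b := by
    intro a b ha hb hr
    rcases hr.cases_head with heq | ⟨s, hs, hrest⟩
    · exact heq
    · have : s = c := hU hs ha
      subst this
      have : b = s := reach_sink hsink hrest
      subst this
      exact absurd hb (hsink _)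
  rcases reach_comparable hU h1.2 h2.2 with h | h
  · exact key _ _ h1.1 h2.1 h
  · exact (key _ _ h2.1 h1.1 h).symm

lemma treePred_eq {T' : Finset (V × V)} {c z y : V}
    (hT' : IsSpanningTreeRootedAt G T' c)
    (hy : (y, c) ∈ T') (hzy : Relation.ReflTransGen (forestStep T') z y) :
    treePred T' z c = y :=
  treePred_unique hT' (treePred_spec ⟨y, hy, hzy⟩) ⟨hy, hzy⟩

/-- Forward surgery: `T` rooted at `y`, adjacent edge `(y,c)`, out-edge `(c,z)` of `c`;
then `insert (y,c) (T.erase (c,z))` is a tree rooted at `c`. -/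
lemma tree_forward {T : Finset (V × V)} {y c z : V}
    (hT : IsSpanningTreeRootedAt G T y) (hadj : G.Adj y c) (hz : (c, z) ∈ T) :
    IsSpanningTreeRootedAt G (insert (y, c) (T.erase (c, z))) c := by
  have hU := tree_outUnique hT
  have hysink := tree_root_sink hT
  have hyc : y ≠ c := hadj.ne
  have hET : T.erase (c, z) ⊆ T := Finset.erase_subset _ _
  have hETi : T.erase (c, z) ⊆ insert (y, c) (T.erase (c, z)) := Finset.subset_insert _ _
  -- c is a sink
  have hcsink : ∀ b, (c, b) ∉ insert (y, c) (T.erase (c, z)) := by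
    intro b hb
    rcases Finset.mem_insert.mp hb with heq | hm
    · exact hyc (congrArg Prod.fst heq).symm
    · have hcb : (c, b) ∈ T := hET hm
      have : b = z := hU hcb hz
      subst this
      exact (Finset.notMem_erase _ _) hm
  -- out-uniqueness
  have hU' : OutUnique (insert (y, c) (T.erase (c, z))) := by
    intro v a b ha hb
    rcases Finset.mem_insert.mp ha with ha1 | ha2
    · rcases Finset.mem_insert.mp hb with hb1 | hb2
      · exact ((Prod.ext_iff.mp ha1).2.trans ((Prod.ext_iff.mp hb1).2).symm : _)
      · obtain ⟨rfl, rfl⟩ : v = y ∧ a = c := Prod.ext_iff.mp ha1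
        exact absurd (hET hb2) (hysink b)
    · rcases Finset.mem_insert.mp hb with hb1 | hb2
      · obtain ⟨rfl, rfl⟩ : v = y ∧ b = c := Prod.ext_iff.mp hb1
        exact absurd (hET ha2) (hysink a)
      · exact hU (hET ha2) (hET hb2)
  refine ⟨?_, card_of_outUnique hU', ?_, ?_⟩
  · intro e he
    rcases Finset.mem_insert.mp he with rfl | hm
    · exact hadj
    · exact hT.1 e (hET hm)
  · -- no cycles
    intro a b hab hr
    rcases Finset.mem_insert.mp hab with heq | hm
    · obtain ⟨rfl, rfl⟩ : a = y ∧ b = c := Prod.ext_iff.mp heq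
      exact hyc (reach_sink hcsink hr)
    · have hac : a ≠ c := by
        rintro rfl
        exact hcsink b (hETi hm)
      rcases reach_insert hr with hEba | ⟨_, hca⟩
      · exact hT.2.2.1 a b (hET hm) (reach_mono hET hEba)
      · exact hac (reach_sink hcsink hca)
  · -- reach root c
    intro v
    induction hT.2.2.2 v using Relation.ReflTransGen.head_induction_on with
    | refl => exact Relation.ReflTransGen.single (Finset.mem_insert_self _ _)
    | head h' h ih =>
      rename_i a s
      by_cases hvc : a = c
      · subst hvc; exact .refl
      · have : (a, s) ∈ T.erase (c, z) := Finset.mem_erase.mpr ⟨by simp [hvc], h'⟩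
        exact Relation.ReflTransGen.head (hETi this) ih

/-- Backward surgery: `T'` rooted at `c`, in-edge `(y,c)` reachable from `z`,
adjacent edge `(c,z)`; then `insert (c,z) (T'.erase (y,c))` is a tree rooted at `y`. -/
lemma tree_backward {T' : Finset (V × V)} {y c z : V}
    (hT' : IsSpanningTreeRootedAt G T' c) (hy : (y, c) ∈ T')
    (hzy : Relation.ReflTransGen (forestStep T') z y) (hcz : G.Adj c z) :
    IsSpanningTreeRootedAt G (insert (c, z) (T'.erase (y, c))) y := by
  have hU := tree_outUnique hT'
  have hcsink := tree_root_sink hT'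
  have hyc : y ≠ c := by
    rintro rfl
    exact hcsink y hy
  have hFT' : T'.erase (y, c) ⊆ T' := Finset.erase_subset _ _
  have hFT : T'.erase (y, c) ⊆ insert (c, z) (T'.erase (y, c)) := Finset.subset_insert _ _
  have hUF : OutUnique (T'.erase (y, c)) := outUnique_subset hFT' hU
  have hcsinkF : ∀ b, (c, b) ∉ T'.erase (y, c) := fun b hb => hcsink b (hFT' hb)
  have hysinkF : ∀ b, (y, b) ∉ T'.erase (y, c) := by
    intro b hb
    have : b = c := hU (hFT' hb) hy
    subst this
    exact (Finset.notMem_erase _ _) hb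
  have hFzy : Relation.ReflTransGen (forestStep (T'.erase (y, c))) z y := by
    rcases reach_erase (e := (y, c)) hzy with h | ⟨h, _⟩ <;> exact h
  have hnFzc : ¬ Relation.ReflTransGen (forestStep (T'.erase (y, c))) z c := by
    intro h
    rcases reach_comparable hUF h hFzy with h' | h'
    · exact hyc (reach_sink hcsinkF h')
    · exact hyc (reach_sink hysinkF h').symm
  have hnTzc : ¬ Relation.ReflTransGen (forestStep (insert (c, z) (T'.erase (y, c)))) z c := by
    intro h
    rcases reach_insert h with h' | ⟨h', _⟩ <;> exact hnFzc h'
  have hdecomp : ∀ v u : V,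
      Relation.ReflTransGen (forestStep (insert (c, z) (T'.erase (y, c)))) v u →
      Relation.ReflTransGen (forestStep (T'.erase (y, c))) v u ∨
        (Relation.ReflTransGen (forestStep (T'.erase (y, c))) v c ∧
          Relation.ReflTransGen (forestStep (T'.erase (y, c))) z u) := by
    intro v u hr
    induction hr using Relation.ReflTransGen.head_induction_on with
    | refl => exact Or.inl .refl
    | head h' h ih =>
      rename_i a s
      rcases Finset.mem_insert.mp h' with heq | hm
      · obtain ⟨rfl, rfl⟩ : a = c ∧ s = z := Prod.ext_iff.mp heq
        rcases ih with hl | ⟨h1, h2⟩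
        · exact Or.inr ⟨.refl, hl⟩
        · exact absurd (reach_mono hFT h1) hnTzc
      · rcases ih with hl | ⟨h1, h2⟩
        · exact Or.inl (Relation.ReflTransGen.head hm hl)
        · exact Or.inr ⟨Relation.ReflTransGen.head hm h1, h2⟩
  have hUT : OutUnique (insert (c, z) (T'.erase (y, c))) := by
    intro v a b ha hb
    rcases Finset.mem_insert.mp ha with ha1 | ha2
    · rcases Finset.mem_insert.mp hb with hb1 | hb2
      · exact ((Prod.ext_iff.mp ha1).2.trans ((Prod.ext_iff.mp hb1).2).symm : _)
      · obtain ⟨rfl, rfl⟩ : v = c ∧ a = z := Prod.ext_iff.mp ha1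
        exact absurd hb2 (hcsinkF b)
    · rcases Finset.mem_insert.mp hb with hb1 | hb2
      · obtain ⟨rfl, rfl⟩ : v = c ∧ b = z := Prod.ext_iff.mp hb1
        exact absurd ha2 (hcsinkF a)
      · exact hUF ha2 hb2
  refine ⟨?_, card_of_outUnique hUT, ?_, ?_⟩
  · intro e he
    rcases Finset.mem_insert.mp he with rfl | hm
    · exact hcz
    · exact hT'.1 e (hFT' hm)
  · -- no cycles
    intro a b hab hr
    rcases Finset.mem_insert.mp hab with heq | hm
    · obtain ⟨rfl, rfl⟩ : a = c ∧ b = z := Prod.ext_iff.mp heq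
      exact hnTzc hr
    · rcases hdecomp b a hr with hl | ⟨h1, h2⟩
      · exact hT'.2.2.1 a b (hFT' hm) (reach_mono hFT' hl)
      · exact hnFzc ((h2.trans (Relation.ReflTransGen.single hm)).trans h1)
  · -- reach root y
    intro v
    rcases reach_erase (e := (y, c)) (hT'.2.2.2 v) with h | ⟨h, _⟩
    · exact (reach_mono hFT h).trans
        (Relation.ReflTransGen.head (Finset.mem_insert_self _ _) (reach_mono hFT hFzy))
    · exact reach_mono hFT h

end TreeLemmas

section Existence
attribute [local instance] Classical.propDecidable
variable {V : Type*} [Fintype V] [DecidableEq V] {G : SimpleGraph V}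

lemma exists_parent (hG : G.Connected) {v c : V} (hv : v ≠ c) :
    ∃ u, G.Adj v u ∧ G.dist u c < G.dist v c := by
  obtain ⟨p, hp⟩ := hG.exists_walk_length_eq_dist v c
  cases p with
  | nil => exact absurd rfl hv
  | cons h q =>
    rename_i u
    refine ⟨u, h, ?_⟩
    have : G.dist u c ≤ q.length := SimpleGraph.dist_le q
    simp only [SimpleGraph.Walk.length_cons] at hp
    omega

noncomputable def parentFun (G : SimpleGraph V) (hG : G.Connected) (c : V) : V → V :=
  fun v => if h : v ≠ c then (exists_parent hG h).choose else v

lemma parentFun_adj (hG : G.Connected) {c v : V} (hv : v ≠ c) :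
    G.Adj v (parentFun G hG c v) ∧ G.dist (parentFun G hG c v) c < G.dist v c := by
  rw [parentFun, dif_pos hv]
  exact (exists_parent hG hv).choose_spec

lemma exists_spanning_tree (hG : G.Connected) (c : V) :
    ∃ F : Finset (V × V), IsSpanningTreeRootedAt G F c := by
  refine ⟨(Finset.univ.erase c).image (fun v => (v, parentFun G hG c v)), ?_, ?_, ?_, ?_⟩
  · intro e he
    obtain ⟨v, hv, rfl⟩ := Finset.mem_image.mp he
    exact (parentFun_adj hG (Finset.mem_erase.mp hv).1).1
  · intro v
    apply Finset.card_le_one.mpr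
    rintro e1 h1 e2 h2
    simp only [Finset.mem_filter, Finset.mem_image] at h1 h2
    obtain ⟨⟨v1, hv1, rfl⟩, h1'⟩ := h1
    obtain ⟨⟨v2, hv2, rfl⟩, h2'⟩ := h2
    simp only at h1' h2'
    rw [h1', h2']
  · -- no cycles: steps decrease distance
    have hdec : ∀ a b : V, forestStep ((Finset.univ.erase c).image (fun v => (v, parentFun G hG c v))) a b →
        G.dist b c < G.dist a c := by
      intro a b hab
      obtain ⟨v, hv, he⟩ := Finset.mem_image.mp hab
      obtain ⟨rfl, rfl⟩ : v = a ∧ parentFun G hG c v = b := Prod.ext_iff.mp he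
      exact (parentFun_adj hG (Finset.mem_erase.mp hv).1).2
    intro a b hab hr
    have hmono : ∀ u w : V,
        Relation.ReflTransGen (forestStep ((Finset.univ.erase c).image (fun v => (v, parentFun G hG c v)))) u w →
        G.dist w c ≤ G.dist u c := by
      intro u w hr
      induction hr using Relation.ReflTransGen.head_induction_on with
      | refl => exact le_refl _
      | head h' h ih => exact le_of_lt (lt_of_le_of_lt ih (hdec _ _ h'))
    have h1 := hdec a b hab
    have h2 := hmono b a hr
    omega
  · -- reach c
    have key : ∀ n : ℕ, ∀ v : V, G.dist v c ≤ n →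
        Relation.ReflTransGen (forestStep ((Finset.univ.erase c).image (fun v => (v, parentFun G hG c v)))) v c := by
      intro n
      induction n with
      | zero =>
        intro v hv
        by_cases hvc : v = c
        · subst hvc; exact .refl
        · have := (parentFun_adj hG hvc).2
          omega
      | succ n ih =>
        intro v hv
        by_cases hvc : v = c
        · subst hvc; exact .refl
        · have hlt := (parentFun_adj hG hvc).2
          have hstep : forestStep ((Finset.univ.erase c).image (fun v => (v, parentFun G hG c v))) v (parentFun G hG c v) :=
            Finset.mem_image.mpr ⟨v, Finset.mem_erase.mpr ⟨hvc, Finset.mem_univ v⟩, rfl⟩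
          exact Relation.ReflTransGen.head hstep (ih _ (by omega))
    intro v
    exact key (G.dist v c) v le_rfl

lemma tree_weight_pos {k : V → V → ℝ} (hkpos : ∀ x y, G.Adj x y → 0 < k x y)
    {F : Finset (V × V)} {r : V} (hF : IsSpanningTreeRootedAt G F r) :
    0 < forestWeight k F :=
  Finset.prod_pos (fun e he => hkpos e.1 e.2 (hF.1 e he))

lemma kirchhoffWeight_eq_sum_filter (k : V → V → ℝ) (G : SimpleGraph V) (c : V) :
    kirchhoffWeight k G c =
      ∑ F ∈ Finset.univ.filter (fun F => IsSpanningTreeRootedAt G F c), forestWeight k F := by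
  rw [Finset.sum_filter, kirchhoffWeight]
  apply Finset.sum_congr rfl
  intro F _
  rw [Set.indicator_apply]
  simp only [Set.mem_setOf_eq]

lemma kirchhoffWeight_pos (hG : G.Connected) {k : V → V → ℝ}
    (hkpos : ∀ x y, G.Adj x y → 0 < k x y) (c : V) : 0 < kirchhoffWeight k G c := by
  rw [kirchhoffWeight_eq_sum_filter]
  obtain ⟨F, hF⟩ := exists_spanning_tree hG c
  apply Finset.sum_pos
  · intro T hT
    exact tree_weight_pos hkpos (Finset.mem_filter.mp hT).2
  · exact ⟨F, Finset.mem_filter.mpr ⟨Finset.mem_univ F, hF⟩⟩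

end Existence

section Key
attribute [local instance] Classical.propDecidable
variable {V : Type*} [Fintype V] [DecidableEq V]

lemma kirchhoff_key (G : SimpleGraph V) (k : V → V → ℝ)
    (hk0 : ∀ x y, ¬ G.Adj x y → k x y = 0) (c : V) :
    ∑ y ∈ Finset.univ.erase c, kirchhoffWeight k G y * k y c
      = kirchhoffWeight k G c * ∑ z ∈ Finset.univ.erase c, k c z := by
  classical
  have hA : Finset.univ.filter (fun y => G.Adj y c) ⊆ Finset.univ.erase c := by
    intro y hy
    simp only [Finset.mem_filter] at hy
    exact Finset.mem_erase.mpr ⟨hy.2.ne, Finset.mem_univ y⟩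
  have hB : Finset.univ.filter (fun z => G.Adj c z) ⊆ Finset.univ.erase c := by
    intro z hz
    simp only [Finset.mem_filter] at hz
    exact Finset.mem_erase.mpr ⟨hz.2.ne', Finset.mem_univ z⟩
  rw [Finset.mul_sum]
  rw [← Finset.sum_subset hA (by
    intro y _ hy2
    simp only [Finset.mem_filter, Finset.mem_univ, true_and] at hy2
    rw [hk0 _ _ hy2, mul_zero])]
  rw [← Finset.sum_subset hB (by
    intro z _ hz2
    simp only [Finset.mem_filter, Finset.mem_univ, true_and] at hz2
    rw [hk0 _ _ hz2, mul_zero])]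
  simp_rw [kirchhoffWeight_eq_sum_filter, Finset.sum_mul]
  rw [Finset.sum_sigma' (Finset.univ.filter (fun y => G.Adj y c))
    (fun y => Finset.univ.filter (fun F => IsSpanningTreeRootedAt G F y))
    (fun y T => forestWeight k T * k y c)]
  rw [Finset.sum_sigma' (Finset.univ.filter (fun z => G.Adj c z))
    (fun _ => Finset.univ.filter (fun F => IsSpanningTreeRootedAt G F c))
    (fun z T => forestWeight k T * k c z)]
  refine Finset.sum_bij'
    (fun p _ => ⟨treeSucc p.2 c, insert (p.1, c) (p.2.erase (c, treeSucc p.2 c))⟩)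
    (fun q _ => ⟨treePred q.2 q.1 c, insert (c, q.1) (q.2.erase (treePred q.2 q.1 c, c))⟩)
    ?_ ?_ ?_ ?_ ?_
  · -- hi : maps into t
    rintro ⟨y, T⟩ hp
    simp only [Finset.mem_sigma, Finset.mem_filter, Finset.mem_univ, true_and] at hp ⊢
    obtain ⟨hadj, hT⟩ := hp
    have hz : (c, treeSucc T c) ∈ T := treeSucc_mem (tree_exists_out hT hadj.ne')
    exact ⟨hT.1 _ hz, tree_forward hT hadj hz⟩
  · -- hj : maps into s
    rintro ⟨z, T'⟩ hq
    simp only [Finset.mem_sigma, Finset.mem_filter, Finset.mem_univ, true_and] at hq ⊢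
    obtain ⟨hadj, hT'⟩ := hq
    have hex : ∃ y, (y, c) ∈ T' ∧ Relation.ReflTransGen (forestStep T') z y := by
      rcases (hT'.2.2.2 z).cases_tail with heq | ⟨y, h1, h2⟩
      · exact absurd heq.symm hadj.ne'
      · exact ⟨y, h2, h1⟩
    obtain ⟨hmem, hreach⟩ := treePred_spec hex
    exact ⟨hT'.1 _ hmem, tree_backward hT' hmem hreach hadj⟩
  · -- left inverse
    rintro ⟨y, T⟩ hp
    simp only [Finset.mem_sigma, Finset.mem_filter, Finset.mem_univ, true_and] at hp
    obtain ⟨hadj, hT⟩ := hp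
    have hz : (c, treeSucc T c) ∈ T := treeSucc_mem (tree_exists_out hT hadj.ne')
    have hT' := tree_forward hT hadj hz
    have hnotmem : (y, c) ∉ T.erase (c, treeSucc T c) :=
      fun h => tree_root_sink hT c (Finset.erase_subset _ _ h)
    have hzy : Relation.ReflTransGen
        (forestStep (insert (y, c) (T.erase (c, treeSucc T c)))) (treeSucc T c) y := by
      rcases reach_erase (e := (c, treeSucc T c)) (hT.2.2.2 (treeSucc T c)) with h | ⟨h, _⟩
      · exact reach_mono (Finset.subset_insert _ _) h
      · exact absurd (reach_mono (Finset.erase_subset _ _) h) (hT.2.2.1 c (treeSucc T c) hz)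
    have h_pred : treePred (insert (y, c) (T.erase (c, treeSucc T c))) (treeSucc T c) c = y :=
      treePred_eq hT' (Finset.mem_insert_self _ _) hzy
    simp only [h_pred]
    rw [Finset.erase_insert hnotmem, Finset.insert_erase hz]
  · -- right inverse
    rintro ⟨z, T'⟩ hq
    simp only [Finset.mem_sigma, Finset.mem_filter, Finset.mem_univ, true_and] at hq
    obtain ⟨hadj, hT'⟩ := hq
    have hex : ∃ y, (y, c) ∈ T' ∧ Relation.ReflTransGen (forestStep T') z y := by
      rcases (hT'.2.2.2 z).cases_tail with heq | ⟨y, h1, h2⟩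
      · exact absurd heq.symm hadj.ne'
      · exact ⟨y, h2, h1⟩
    obtain ⟨hmem, hreach⟩ := treePred_spec hex
    have hT2 := tree_backward hT' hmem hreach hadj
    have hnotmem : (c, z) ∉ T'.erase (treePred T' z c, c) :=
      fun h => tree_root_sink hT' z (Finset.erase_subset _ _ h)
    have h_succ : treeSucc (insert (c, z) (T'.erase (treePred T' z c, c))) c = z :=
      treeSucc_eq (tree_outUnique hT2) (Finset.mem_insert_self _ _)
    simp only [h_succ]
    rw [Finset.erase_insert hnotmem, Finset.insert_erase hmem]
  · -- weights
    rintro ⟨y, T⟩ hp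
    simp only [Finset.mem_sigma, Finset.mem_filter, Finset.mem_univ, true_and] at hp
    obtain ⟨hadj, hT⟩ := hp
    have hz : (c, treeSucc T c) ∈ T := treeSucc_mem (tree_exists_out hT hadj.ne')
    have hnotmem : (y, c) ∉ T.erase (c, treeSucc T c) :=
      fun h => tree_root_sink hT c (Finset.erase_subset _ _ h)
    have e1 : forestWeight k (insert (y, c) (T.erase (c, treeSucc T c)))
        = k y c * ∏ e ∈ T.erase (c, treeSucc T c), k e.1 e.2 := Finset.prod_insert hnotmem
    have e2 : k c (treeSucc T c) * ∏ e ∈ T.erase (c, treeSucc T c), k e.1 e.2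
        = forestWeight k T := Finset.mul_prod_erase T (fun e => k e.1 e.2) hz
    show forestWeight k T * k y c = _ * k c (treeSucc T c)
    rw [← e2, e1]
    ring

lemma kirchhoff_stationary (G : SimpleGraph V) (k : V → V → ℝ)
    (hk0 : ∀ x y, ¬ G.Adj x y → k x y = 0)
    (L : Matrix V V ℝ)
    (hL : ∀ x y, L x y = if x = y then -(∑ z ∈ Finset.univ.erase x, k x z) else k x y)
    (c : V) : ∑ y, kirchhoffWeight k G y * L y c = 0 := by
  rw [← Finset.sum_erase_add _ _ (Finset.mem_univ c)]
  have h1 : ∑ y ∈ Finset.univ.erase c, kirchhoffWeight k G y * L y c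
      = ∑ y ∈ Finset.univ.erase c, kirchhoffWeight k G y * k y c := by
    apply Finset.sum_congr rfl
    intro y hy
    rw [hL y c, if_neg (Finset.mem_erase.mp hy).1]
  rw [h1, hL c c, if_pos rfl, kirchhoff_key G k hk0 c]
  ring

end Key

section Main
variable {V : Type*} [Fintype V] [DecidableEq V]

lemma max_principle (G : SimpleGraph V) (hG : G.Connected)
    (k : V → V → ℝ) (hkpos : ∀ x y, G.Adj x y → 0 < k x y)
    (hk0 : ∀ x y, ¬ G.Adj x y → k x y = 0)
    (L : Matrix V V ℝ)
    (hL : ∀ x y, L x y = if x = y then -(∑ z ∈ Finset.univ.erase x, k x z) else k x y)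
    (u : V → ℝ) (hupos : ∀ v, 0 ≤ u v)
    (hustat : ∀ c, ∑ y, u y * L y c = 0)
    (v₀ : V) (h0 : u v₀ = 0) : ∀ v, u v = 0 := by
  have hprop : ∀ c, u c = 0 → ∀ b, G.Adj b c → u b = 0 := by
    intro c hc b hadj
    have h0' := hustat c
    rw [← Finset.sum_erase_add _ _ (Finset.mem_univ c)] at h0'
    have h1 : ∑ y ∈ Finset.univ.erase c, u y * L y c
        = ∑ y ∈ Finset.univ.erase c, u y * k y c := by
      apply Finset.sum_congr rfl
      intro y hy
      rw [hL y c, if_neg (Finset.mem_erase.mp hy).1]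
    rw [h1, hc, zero_mul, add_zero] at h0'
    have hterm : ∀ y ∈ Finset.univ.erase c, 0 ≤ u y * k y c := by
      intro y _
      apply mul_nonneg (hupos y)
      by_cases h : G.Adj y c
      · exact (hkpos _ _ h).le
      · rw [hk0 _ _ h]
    have hb := (Finset.sum_eq_zero_iff_of_nonneg hterm).mp h0' b
      (Finset.mem_erase.mpr ⟨hadj.ne, Finset.mem_univ b⟩)
    rcases mul_eq_zero.mp hb with h | h
    · exact h
    · exact absurd h (hkpos b c hadj).ne'
  intro v
  obtain ⟨p⟩ := hG.preconnected v₀ v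
  have key : ∀ (a b : V) (p : G.Walk a b), u a = 0 → u b = 0 := by
    intro a b p
    induction p with
    | nil => exact id
    | cons h q ih =>
      intro ha
      exact ih (hprop _ ha _ h.symm)
  exact key v₀ v p h0

theorem kirchhoff_stationary_distribution'
    {V : Type*} [Fintype V] [DecidableEq V]
    (G : SimpleGraph V) (hG : G.Connected)
    (k : V → V → ℝ) (hkpos : ∀ x y, G.Adj x y → 0 < k x y)
    (hk0 : ∀ x y, ¬ G.Adj x y → k x y = 0)
    (L : Matrix V V ℝ)
    (hL : ∀ x y, L x y = if x = y then -(∑ z ∈ Finset.univ.erase x, k x z) else k x y)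
    (ρ : V → ℝ) (hρpos : ∀ x, 0 ≤ ρ x) (hρsum : ∑ x, ρ x = 1)
    (hρstat : Matrix.vecMul ρ L = 0) (x : V) :
    ρ x = kirchhoffWeight k G x / ∑ y, kirchhoffWeight k G y := by
  classical
  have hwpos : ∀ v, 0 < kirchhoffWeight k G v := kirchhoffWeight_pos hG hkpos
  have hS : (Finset.univ.image (fun v => ρ v / kirchhoffWeight k G v)).Nonempty :=
    ⟨ρ x / kirchhoffWeight k G x, Finset.mem_image_of_mem _ (Finset.mem_univ x)⟩
  obtain ⟨v₀, -, hv₀⟩ := Finset.mem_image.mp (Finset.max'_mem _ hS)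
  set m := (Finset.univ.image (fun v => ρ v / kirchhoffWeight k G v)).max' hS with hm
  have hub : ∀ v, ρ v ≤ m * kirchhoffWeight k G v := by
    intro v
    have h1 : ρ v / kirchhoffWeight k G v ≤ m := by
      rw [hm]
      exact Finset.le_max' (Finset.univ.image (fun v => ρ v / kirchhoffWeight k G v))
        (ρ v / kirchhoffWeight k G v) (Finset.mem_image_of_mem _ (Finset.mem_univ v))
    rw [div_le_iff₀ (hwpos v)] at h1
    linarith
  have h00 : m * kirchhoffWeight k G v₀ - ρ v₀ = 0 := by
    have : ρ v₀ = m * kirchhoffWeight k G v₀ := by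
      rw [← hv₀]
      exact (div_mul_cancel₀ _ (hwpos v₀).ne').symm
    linarith
  have hustat : ∀ c, ∑ y, (m * kirchhoffWeight k G y - ρ y) * L y c = 0 := by
    intro c
    have h1 := kirchhoff_stationary G k hk0 L hL c
    have h2 : ∑ y, ρ y * L y c = 0 := by
      have h3 := congrFun hρstat c
      simpa [Matrix.vecMul, dotProduct] using h3
    have h4 : ∑ y, (m * kirchhoffWeight k G y - ρ y) * L y c
        = m * (∑ y, kirchhoffWeight k G y * L y c) - ∑ y, ρ y * L y c := by
      rw [Finset.mul_sum, ← Finset.sum_sub_distrib]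
      apply Finset.sum_congr rfl
      intro y _
      ring
    rw [h4, h1, h2]
    ring
  have hall := max_principle G hG k hkpos hk0 L hL
    (fun v => m * kirchhoffWeight k G v - ρ v)
    (fun v => by simpa using sub_nonneg.mpr (hub v)) hustat v₀ h00
  have hρw : ∀ v, ρ v = m * kirchhoffWeight k G v := by
    intro v
    have := hall v
    linarith
  have hspos : 0 < ∑ y, kirchhoffWeight k G y :=
    Finset.sum_pos (fun v _ => hwpos v) ⟨x, Finset.mem_univ x⟩
  have hsum : m * (∑ y, kirchhoffWeight k G y) = 1 := by
    rw [← hρsum, Finset.mul_sum]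
    exact Finset.sum_congr rfl (fun v _ => (hρw v).symm)
  rw [hρw x, eq_div_iff hspos.ne']
  calc m * kirchhoffWeight k G x * ∑ y, kirchhoffWeight k G y
      = kirchhoffWeight k G x * (m * ∑ y, kirchhoffWeight k G y) := by ring
    _ = kirchhoffWeight k G x := by rw [hsum, mul_one]

end Main

/-- Kirchhoff / matrix-tree formula: for an irreducible Markov jump process on
a finite connected graph, the unique stationary distribution is
`ρ(x) = w(x) / ∑_y w(y)`, where `w(x)` is the sum over all spanning trees
rooted at `x` of the products of the rates along their edges. -/
theorem kirchhoff_stationary_distribution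
    {V : Type*} [Fintype V] [DecidableEq V]
    (G : SimpleGraph V) (hG : G.Connected)
    (k : V → V → ℝ) (hkpos : ∀ x y, G.Adj x y → 0 < k x y)
    (hk0 : ∀ x y, ¬ G.Adj x y → k x y = 0)
    (L : Matrix V V ℝ)
    (hL : ∀ x y, L x y = if x = y then -(∑ z ∈ Finset.univ.erase x, k x z) else k x y)
    (ρ : V → ℝ) (hρpos : ∀ x, 0 ≤ ρ x) (hρsum : ∑ x, ρ x = 1)
    (hρstat : Matrix.vecMul ρ L = 0) (x : V) :
    ρ x = kirchhoffWeight k G x / ∑ y, kirchhoffWeight k G y := by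
  exact kirchhoff_stationary_distribution' G hG k hkpos hk0 L hL ρ hρpos hρsum hρstat x
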